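/- Let (M, g, f) be a Bach-flat Miao-Tam critical metric (so T ≡ 0 and C ≡ 0). For a regular level set Σ_c = {f = c}, c ≠ 0, the second fundamental form with respect to ν = -∇f/|∇f| satisfies II_{ab} = (1/|∇f|)[-f R_{ab} + ((Rf+1)/(n-1))g_{ab}], which combined with II_{ab} = (H/(n-1))g_{ab} gives R_{ab} = ((R - R₁₁)/(n-1))g_{ab} for all 2 ≤ a,b ≤ n. -/

import Mathlib

/-- For a Bach-flat Miao-Tam critical metric and a regular level set
`Σ_c = {f = c}` (`c ≠ 0`, `f > 0` inside), with `ν = -∇f/|∇f|` (frame index `e1`),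
the second fundamental form satisfies
`II_{ab} = (1/|∇f|)[-fR_{ab} + ((Rf+1)/(n-1))g_{ab}]`, which combined with the
umbilicity `II_{ab} = (H/(n-1))g_{ab}` gives
`R_{ab} = ((R - R₁₁)/(n-1))g_{ab}` for all tangential `a, b`. -/
theorem level_set_second_fundamental_form (n : ℕ) (hn : 3 ≤ n)
    (e1 : Fin n)
    (f Δf R H c : ℝ) (hc : 0 < c) (hf : 0 < f)
    (g Ric Hess II : Fin n → Fin n → ℝ)
    (hg : ∀ i j, g i j = if i = j then 1 else 0)
    -- the Miao-Tam equation and its trace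
    (hMT : ∀ i j, -(Δf) * g i j + Hess i j - f * Ric i j = g i j)
    (htrace : Δf = -(R * f + (n : ℝ)) / ((n : ℝ) - 1))
    -- second fundamental form of the level set (c = |∇f|)
    (hII : ∀ a b, a ≠ e1 → b ≠ e1 → II a b = -(1 / c) * Hess a b)
    -- mean curvature
    (hH : H = (1 / c) * (f * Ric e1 e1 + 1))
    -- umbilicity coming from T ≡ 0
    (humb : ∀ a b, a ≠ e1 → b ≠ e1 → II a b = H / ((n : ℝ) - 1) * g a b) :
    (∀ a b, a ≠ e1 → b ≠ e1 →
      II a b = (1 / c) * (-(f * Ric a b) + (R * f + 1) / ((n : ℝ) - 1) * g a b))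
    ∧ (∀ a b, a ≠ e1 → b ≠ e1 →
      Ric a b = (R - Ric e1 e1) / ((n : ℝ) - 1) * g a b) := by
  have hn1 : ((n : ℝ) - 1) ≠ 0 := by
    have : (3:ℝ) ≤ (n:ℝ) := by exact_mod_cast hn
    linarith
  have hc' : c ≠ 0 := ne_of_gt hc
  have hf' : f ≠ 0 := ne_of_gt hf
  have h1 : ∀ a b, a ≠ e1 → b ≠ e1 →
      II a b = (1 / c) * (-(f * Ric a b) + (R * f + 1) / ((n : ℝ) - 1) * g a b) := by
    intro a b ha hb
    have hmt := hMT a b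
    rw [hII a b ha hb, htrace] at *
    field_simp at *
    linear_combination (-1) * hmt
  refine ⟨h1, fun a b ha hb => ?_⟩
  have h2 := h1 a b ha hb
  have h3 := humb a b ha hb
  rw [hH] at h3
  rw [h3] at h2
  field_simp at h2
  field_simp
  have h4 : f * (Ric a b * ((n:ℝ) - 1)) = f * ((R - Ric e1 e1) * g a b) := by
    linear_combination h2
  exact mul_left_cancel₀ hf' h4
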